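/- Let a > 0 and let z be a real random variable whose distribution is atomless and satisfies the scale condition: P(z ≥ x) ≤ 1/(2 + a·x) for all x ≥ 0 and P(z ≤ x) ≤ 1/(2 + a·|x|) for all x < 0. Then for every real number c, E(|z + c| − |z|) ≥ (a/16)·|c|·min(|c|, 6/a). -/

import Mathlib

open MeasureTheory

open Set
set_option linter.unusedVariables false

lemma key_lemma {Ω : Type*} [MeasurableSpace Ω] (μ : Measure Ω) [IsProbabilityMeasure μ]
    (a : ℝ) (ha : 0 < a) (z : Ω → ℝ) (hz : Measurable z)
    (htail : ∀ t : ℝ, 0 < t → (μ {ω | z ω ≤ -t}).toReal ≤ 1 / (2 + a * t))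
    (c : ℝ) (hc : 0 < c) :
    (a / 16) * c * min c (6 / a) ≤ ∫ ω, (|z ω + c| - |z ω|) ∂μ := by
  set m : ℝ := min c (6 / a) with hm
  have hm_pos : 0 < m := lt_min hc (by positivity)
  have hmc : m ≤ c := min_le_left _ _
  have hma : a * m ≤ 6 := by
    have : m ≤ 6 / a := min_le_right _ _
    calc a * m ≤ a * (6 / a) := by nlinarith
    _ = 6 := by field_simp
  set k : ℝ := a * m / (16 * c) with hk
  set g : Ω → ℝ := fun ω => min c (max (-z ω) 0) with hg
  -- pointwise identity
  have hident : ∀ ω, |z ω + c| - |z ω| = c - 2 * g ω := by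
    intro ω
    set x := z ω
    simp only [hg]
    rcases le_total (-x) 0 with h | h
    · rw [max_eq_right h, min_eq_right hc.le]
      rw [abs_of_nonneg (by linarith), abs_of_nonneg (by linarith)]
      ring
    · rcases le_total c (-x) with h2 | h2
      · rw [max_eq_left h, min_eq_left h2]
        rw [abs_of_nonpos (by linarith), abs_of_nonpos (by linarith)]
        ring
      · rw [max_eq_left h, min_eq_right h2]
        rw [abs_of_nonneg (by linarith), abs_of_nonpos (by linarith)]
        ring
  have hg_meas : Measurable g := (measurable_const.min ((hz.neg).max measurable_const))
  have hg_nonneg : ∀ ω, 0 ≤ g ω := fun ω => le_min hc.le (le_max_right _ _)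
  have hg_le : ∀ ω, g ω ≤ c := fun ω => min_le_left _ _
  have hg_int : Integrable g μ := by
    apply Integrable.mono' (integrable_const c) hg_meas.aestronglyMeasurable
    filter_upwards with ω
    rw [Real.norm_eq_abs, abs_of_nonneg (hg_nonneg ω)]
    exact hg_le ω
  -- layer cake
  have hlayer : ∫ ω, g ω ∂μ = ∫ t in Ioc 0 c, (μ {ω | t ≤ g ω}).toReal :=
    hg_int.integral_eq_integral_Ioc_meas_le (Filter.Eventually.of_forall hg_nonneg)
      (Filter.Eventually.of_forall hg_le)
  -- F is antitone hence measurable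
  set F : ℝ → ℝ := fun t => (μ {ω | t ≤ g ω}).toReal with hF
  have hF_anti : Antitone F := by
    intro s t hst
    apply ENNReal.toReal_mono (measure_ne_top μ _)
    exact measure_mono (fun ω hω => le_trans hst hω)
  have hF_int : IntegrableOn F (Ioc 0 c) := by
    apply Integrable.mono' (integrable_const 1)
      (hF_anti.measurable.aestronglyMeasurable)
    filter_upwards with t
    rw [Real.norm_eq_abs, abs_of_nonneg ENNReal.toReal_nonneg]
    simpa using ENNReal.toReal_mono ENNReal.one_ne_top prob_le_one
  -- pointwise bound on Ioc 0 c
  have hbound : ∀ t ∈ Ioc 0 c, F t ≤ 1 / 2 - k * t := by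
    intro t ht
    obtain ⟨ht0, htc⟩ := ht
    have h1 : F t ≤ (μ {ω | z ω ≤ -t}).toReal := by
      apply ENNReal.toReal_mono (measure_ne_top μ _)
      apply measure_mono
      intro ω hω
      have : t ≤ max (-z ω) 0 := le_trans hω (min_le_right _ _)
      have h4 : t ≤ -z ω := by
        rcases le_max_iff.mp this with h | h
        · exact h
        · linarith
      simpa [Set.mem_setOf_eq] using by linarith
    have h2 : (μ {ω | z ω ≤ -t}).toReal ≤ 1 / (2 + a * t) := htail t ht0
    have h3 : (1 : ℝ) / (2 + a * t) ≤ 1 / 2 - k * t := by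
      have hpos : (0:ℝ) < 2 + a * t := by nlinarith
      rw [div_le_iff₀ hpos]
      have h8 : 2 * m + a * m * t ≤ 8 * c := by
        nlinarith [mul_le_mul_of_nonneg_right hma ht0.le]
      have h9 : k * (t * (2 + a * t)) ≤ a * t / 2 := by
        rw [hk, div_mul_eq_mul_div, div_le_iff₀ (by positivity : (0:ℝ) < 16 * c)]
        nlinarith [mul_le_mul_of_nonneg_left h8 (mul_pos ha ht0).le]
      nlinarith [h9]
    linarith
  -- integral bound
  have hint2 : IntegrableOn (fun t : ℝ => 1 / 2 - k * t) (Ioc 0 c) :=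
    (continuous_const.sub (continuous_const.mul continuous_id)).integrableOn_Ioc
  have hmono : ∫ t in Ioc 0 c, F t ≤ ∫ t in Ioc 0 c, (1 / 2 - k * t) :=
    setIntegral_mono_on hF_int hint2 measurableSet_Ioc hbound
  have hcomp : ∫ t in Ioc 0 c, (1 / 2 - k * t) = c / 2 - k * c ^ 2 / 2 := by
    rw [← intervalIntegral.integral_of_le hc.le]
    rw [intervalIntegral.integral_sub intervalIntegrable_const
      ((by fun_prop : Continuous fun t : ℝ => k * t).intervalIntegrable 0 c)]
    rw [intervalIntegral.integral_const_mul, integral_id, intervalIntegral.integral_const]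
    simp only [smul_eq_mul, sub_zero]
    ring
  -- put it together
  have hEg : ∫ ω, g ω ∂μ ≤ c / 2 - k * c ^ 2 / 2 := by
    rw [hlayer]; rw [← hcomp]; exact hmono
  have hEf : ∫ ω, (|z ω + c| - |z ω|) ∂μ = c - 2 * ∫ ω, g ω ∂μ := by
    have : ∫ ω, (|z ω + c| - |z ω|) ∂μ = ∫ ω, (c - 2 * g ω) ∂μ := by
      apply integral_congr_ae
      filter_upwards with ω using hident ω
    rw [this, integral_sub (integrable_const c) (hg_int.const_mul 2),
      integral_const, integral_const_mul]
    simp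
  rw [hEf]
  have : k * c ^ 2 = (a / 16) * c * m := by
    rw [hk]; field_simp
  linarith

/-- **Lemma 5: quadratic-linear lower bound for the expected absolute deviation.**
If `z` is atomless and satisfies the scale condition `P(z ≥ x) ≤ 1/(2 + a x)` for
`x ≥ 0` and `P(z ≤ x) ≤ 1/(2 + a |x|)` for `x < 0`, then for every real `c`,
`E(|z + c| - |z|) ≥ (a/16) |c| min(|c|, 6/a)`. -/
theorem expected_abs_dev_scale_bound
    {Ω : Type*} [MeasurableSpace Ω] (μ : Measure Ω) [IsProbabilityMeasure μ]
    (a : ℝ) (ha : 0 < a)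
    (z : Ω → ℝ) (hz : Measurable z)
    (hatom : ∀ x : ℝ, μ {ω | z ω = x} = 0)
    (htail₁ : ∀ x : ℝ, 0 ≤ x → (μ {ω | x ≤ z ω}).toReal ≤ 1 / (2 + a * x))
    (htail₂ : ∀ x : ℝ, x < 0 → (μ {ω | z ω ≤ x}).toReal ≤ 1 / (2 + a * |x|))
    (c : ℝ) :
    (a / 16) * |c| * min |c| (6 / a) ≤ ∫ ω, (|z ω + c| - |z ω|) ∂μ := by
  rcases lt_trichotomy c 0 with hc | hc | hc
  · have htail : ∀ t : ℝ, 0 < t → (μ {ω | (fun ω => -z ω) ω ≤ -t}).toReal ≤ 1 / (2 + a * t) := by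
      intro t ht
      have : {ω | (fun ω => -z ω) ω ≤ -t} = {ω | t ≤ z ω} := by
        ext ω; simp only [Set.mem_setOf_eq]; constructor <;> intro h <;> linarith
      rw [this]
      exact htail₁ t ht.le
    have h := key_lemma μ a ha (fun ω => -z ω) hz.neg htail (-c) (by linarith)
    have heq : ∫ ω, (|(fun ω => -z ω) ω + -c| - |(fun ω => -z ω) ω|) ∂μ
        = ∫ ω, (|z ω + c| - |z ω|) ∂μ := by
      apply integral_congr_ae
      filter_upwards with ω
      have h1 : -z ω + -c = -(z ω + c) := by ring
      rw [h1, abs_neg, abs_neg]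
    rw [heq] at h
    rwa [abs_of_neg hc]
  · simp [hc]
  · have htail : ∀ t : ℝ, 0 < t → (μ {ω | z ω ≤ -t}).toReal ≤ 1 / (2 + a * t) := by
      intro t ht
      have := htail₂ (-t) (by linarith)
      rwa [abs_neg, abs_of_pos ht] at this
    have h := key_lemma μ a ha z hz htail c hc
    rwa [abs_of_pos hc]
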